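/- Fix λ ∈ (0,1). Define γ : ℕ × ℕ → ℝ by γ(0, i) = 0 for i ≥ 1, γ(ℓ, 0) = 1, and γ(ℓ, i) = (λ·γ(ℓ−1, i−1) + γ(ℓ−1, i+1))/2 for ℓ, i ≥ 1. Then for each fixed i, the limit γ_i := lim_{ℓ→∞} γ(ℓ, i) exists and equals (1 − √(1 − λ))^i. -/
import Mathlib


theorem stmt_7 (lam : ℝ) (hlam0 : 0 < lam) (hlam1 : lam < 1)
    (γ : ℕ → ℕ → ℝ)
    (h0 : ∀ i, 1 ≤ i → γ 0 i = 0)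
    (h1 : ∀ ℓ, γ ℓ 0 = 1)
    (hrec : ∀ ℓ i, 1 ≤ ℓ → 1 ≤ i →
      γ ℓ i = (lam * γ (ℓ - 1) (i - 1) + γ (ℓ - 1) (i + 1)) / 2) :
    ∀ i, Filter.Tendsto (fun ℓ => γ ℓ i) Filter.atTop
      (nhds ((1 - Real.sqrt (1 - lam)) ^ i)) := by
  set r : ℝ := 1 - Real.sqrt (1 - lam) with hr
  have h1l : (0:ℝ) ≤ 1 - lam := by linarith
  have hs0 : 0 < Real.sqrt (1 - lam) := Real.sqrt_pos.mpr (by linarith)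
  have hs1 : Real.sqrt (1 - lam) < 1 := by
    have := Real.sqrt_lt_sqrt h1l (show 1 - lam < 1 by linarith)
    simpa using this
  have hr0 : 0 < r := by rw [hr]; linarith
  have hr1 : r < 1 := by rw [hr]; linarith
  have hsq : r ^ 2 = 2 * r - lam := by
    have h : Real.sqrt (1 - lam) ^ 2 = 1 - lam := Real.sq_sqrt h1l
    rw [hr]; nlinarith [h]
  set q : ℝ := (1 + lam) / 2 with hq
  have hq0 : 0 ≤ q := by rw [hq]; linarith
  have hq1 : q < 1 := by rw [hq]; linarith
  have key : ∀ ℓ i, 0 ≤ r ^ i - γ ℓ i ∧ r ^ i - γ ℓ i ≤ q ^ ℓ := by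
    intro ℓ
    induction ℓ with
    | zero =>
      intro i
      match i with
      | 0 => simp [h1 0]
      | (j+1) =>
        rw [h0 (j+1) (Nat.le_add_left 1 j)]
        constructor
        · simp only [sub_zero]; positivity
        · simp only [pow_zero, sub_zero]
          exact le_of_lt (pow_lt_one₀ hr0.le hr1 (Nat.succ_ne_zero j))
    | succ ℓ ih =>
      intro i
      match i with
      | 0 =>
        rw [h1 (ℓ+1)]
        constructor
        · simp
        · simp only [pow_zero, sub_self]
          positivity
      | (j+1) =>
        have hrw := hrec (ℓ+1) (j+1) (Nat.le_add_left 1 ℓ) (Nat.le_add_left 1 j)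
        simp only [Nat.add_sub_cancel] at hrw
        rw [hrw]
        have e1 := ih j
        have e2 := ih (j+1+1)
        have hp1 : r ^ (j+1) = r ^ j * r := by ring
        have hp2 : r ^ (j+1+1) = r ^ j * r ^ 2 := by ring
        have hqp : q ^ (ℓ+1) = (lam * q ^ ℓ + q ^ ℓ) / 2 := by
          rw [pow_succ, hq]; ring
        have hkey : lam * r ^ j + r ^ (j+1+1) = 2 * r ^ (j+1) := by
          rw [hp1, hp2, hsq]; ring
        constructor
        · linarith [mul_nonneg hlam0.le e1.1, e2.1]
        · linarith [mul_le_mul_of_nonneg_left e1.2 hlam0.le, e2.2]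
  intro i
  have hq' : Filter.Tendsto (fun ℓ => q ^ ℓ) Filter.atTop (nhds 0) :=
    tendsto_pow_atTop_nhds_zero_of_lt_one hq0 hq1
  have hz : Filter.Tendsto (fun ℓ => γ ℓ i - r ^ i) Filter.atTop (nhds 0) := by
    apply squeeze_zero_norm _ hq'
    intro ℓ
    have h := key ℓ i
    rw [Real.norm_eq_abs, abs_sub_comm, abs_of_nonneg h.1]
    exact h.2
  have := hz.add_const (r ^ i)
  simpa using this
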